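/- Let u : ℝ → ℝ be a non-constant, twice differentiable function such that u, u' and u'' are bounded, and assume |u'| attains its maximal value, i.e. there exists t₀ ∈ ℝ with |u'(t₀)| = sup_{t∈ℝ} |u'(t)|. Then sup_{t∈ℝ} u''(t) ≥ (sup_{t∈ℝ} |u'(t)|)² / (2 · (sup u − inf u)). -/

import Mathlib

private lemma lh_key (u : ℝ → ℝ) (hd : Differentiable ℝ u) (hd2 : Differentiable ℝ (deriv u))
    (S : ℝ) (hS : ∀ t, deriv (deriv u) t ≤ S) (t₀ D : ℝ) (hD : deriv u t₀ = D)
    (h : ℝ) (hh : 0 ≤ h) : D * h - S * h ^ 2 / 2 ≤ u t₀ - u (t₀ - h) := by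
  -- step 1 : deriv u s ≥ D - S * (t₀ - s) for s ≤ t₀
  have hp : ∀ s ≤ t₀, D - S * (t₀ - s) ≤ deriv u s := by
    intro s hs
    have hpd : ∀ x : ℝ, HasDerivAt (fun s => deriv u s - S * s) (deriv (deriv u) x - S) x := by
      intro x
      simpa using ((hd2 x).hasDerivAt.fun_sub ((hasDerivAt_id x).const_mul S))
    have hanti : Antitone (fun s => deriv u s - S * s) := by
      apply antitone_of_deriv_nonpos (fun x => (hpd x).differentiableAt)
      intro x
      rw [(hpd x).deriv]
      linarith [hS x]
    have := hanti hs
    simp only [hD] at this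
    linarith
  -- step 2 : monotone q on Iic t₀
  have hqd : ∀ x : ℝ, HasDerivAt (fun s => u s - D * s - S * (t₀ - s) ^ 2 / 2)
      (deriv u x - D + S * (t₀ - x)) x := by
    intro x
    have h1 : HasDerivAt (fun s : ℝ => t₀ - s) (-1) x := (hasDerivAt_id x).const_sub t₀
    have h2 := (((h1.fun_pow 2).const_mul S).div_const 2)
    have h3 := ((hd x).hasDerivAt.fun_sub ((hasDerivAt_id x).const_mul D)).fun_sub h2
    exact h3.congr_deriv (by ring)
  have hmono : MonotoneOn (fun s => u s - D * s - S * (t₀ - s) ^ 2 / 2) (Set.Iic t₀) := by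
    apply monotoneOn_of_deriv_nonneg (convex_Iic t₀)
    · exact (Differentiable.continuous (fun x => (hqd x).differentiableAt)).continuousOn
    · exact fun x _ => (hqd x).differentiableAt.differentiableWithinAt
    · intro x hx
      rw [interior_Iic] at hx
      rw [(hqd x).deriv]
      have := hp x (le_of_lt hx)
      linarith
  have h1 : t₀ - h ∈ Set.Iic t₀ := by simp [hh]
  have h2 : t₀ ∈ Set.Iic t₀ := Set.mem_Iic.mpr le_rfl
  have := hmono h1 h2 (by linarith)
  simp only at this
  nlinarith [this]

/-- Landau–Hadamard type inequality for a real function of one variable. -/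
theorem landau_hadamard (u : ℝ → ℝ)
    (h_nonconst : ∃ a b : ℝ, u a ≠ u b)
    (h_diff : Differentiable ℝ u) (h_diff2 : Differentiable ℝ (deriv u))
    (h_bd : ∃ M : ℝ, ∀ t, |u t| ≤ M)
    (h_bd' : ∃ M : ℝ, ∀ t, |deriv u t| ≤ M)
    (h_bd'' : ∃ M : ℝ, ∀ t, |deriv (deriv u) t| ≤ M)
    (h_attain : ∃ t₀ : ℝ, |deriv u t₀| = ⨆ t, |deriv u t|) :
    (⨆ t, deriv (deriv u) t)
      ≥ (⨆ t, |deriv u t|) ^ 2 / (2 * ((⨆ t, u t) - ⨅ t, u t)) := by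
  obtain ⟨M, hM⟩ := h_bd
  obtain ⟨M', hM'⟩ := h_bd'
  obtain ⟨M'', hM''⟩ := h_bd''
  obtain ⟨t₀, ht₀⟩ := h_attain
  set D := ⨆ t, |deriv u t| with hDdef
  set S := ⨆ t, deriv (deriv u) t with hSdef
  set A := ⨆ t, u t with hAdef
  set B := ⨅ t, u t with hBdef
  have hbA : BddAbove (Set.range u) := ⟨M, by rintro x ⟨t, rfl⟩; exact (abs_le.mp (hM t)).2⟩
  have hbB : BddBelow (Set.range u) := ⟨-M, by rintro x ⟨t, rfl⟩; exact (abs_le.mp (hM t)).1⟩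
  have hbD : BddAbove (Set.range fun t => |deriv u t|) := ⟨M', by rintro x ⟨t, rfl⟩; exact hM' t⟩
  have hbS : BddAbove (Set.range fun t => deriv (deriv u) t) :=
    ⟨M'', by rintro x ⟨t, rfl⟩; exact (abs_le.mp (hM'' t)).2⟩
  have huA : ∀ t, u t ≤ A := fun t => le_ciSup hbA t
  have huB : ∀ t, B ≤ u t := fun t => ciInf_le hbB t
  have hS : ∀ t, deriv (deriv u) t ≤ S := fun t => le_ciSup hbS t
  have hD : ∀ t, |deriv u t| ≤ D := fun t => le_ciSup hbD t
  -- D > 0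
  obtain ⟨a, b, hab⟩ := h_nonconst
  have hDpos : 0 < D := by
    rcases lt_trichotomy a b with hlt | heq | hgt
    · obtain ⟨c, _, hc⟩ := exists_deriv_eq_slope u hlt h_diff.continuous.continuousOn
        (fun x _ => (h_diff x).differentiableWithinAt)
      have : deriv u c ≠ 0 := by
        rw [hc]
        exact div_ne_zero (sub_ne_zero.mpr (Ne.symm hab)) (sub_ne_zero.mpr (ne_of_gt hlt))
      calc 0 < |deriv u c| := abs_pos.mpr this
        _ ≤ D := hD c
    · exact absurd (by rw [heq]) hab
    · obtain ⟨c, _, hc⟩ := exists_deriv_eq_slope u hgt h_diff.continuous.continuousOn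
        (fun x _ => (h_diff x).differentiableWithinAt)
      have : deriv u c ≠ 0 := by
        rw [hc]
        exact div_ne_zero (sub_ne_zero.mpr hab) (sub_ne_zero.mpr (ne_of_gt hgt))
      calc 0 < |deriv u c| := abs_pos.mpr this
        _ ≤ D := hD c
  -- A - B > 0
  have hoscpos : 0 < A - B := by
    by_contra hc
    push_neg at hc
    have h1 : A ≤ B := by linarith
    have : u a = u b :=
      le_antisymm ((huA a).trans (h1.trans (huB b))) ((huA b).trans (h1.trans (huB a)))
    exact hab this
  -- key inequality
  have hkey : ∀ h : ℝ, 0 ≤ h → D * h - S * h ^ 2 / 2 ≤ A - B := by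
    intro h hh
    rcases abs_cases (deriv u t₀) with ⟨he, _⟩ | ⟨he, _⟩
    · have := lh_key u h_diff h_diff2 S hS t₀ D (by rw [← he, ht₀]) h hh
      have h1 := huA t₀
      have h2 := huB (t₀ - h)
      linarith
    · -- deriv u t₀ = -D; use v t = u (-t)
      set v := fun t => u (-t) with hv
      have hdv : Differentiable ℝ v := h_diff.comp differentiable_neg
      have hdv1 : deriv v = fun t => -deriv u (-t) := funext fun t => deriv_comp_neg u t
      have hdv2 : Differentiable ℝ (deriv v) := by
        rw [hdv1]; exact (h_diff2.comp differentiable_neg).neg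
      have hSv : ∀ t, deriv (deriv v) t ≤ S := by
        intro t
        rw [hdv1]
        have : deriv (fun t => -deriv u (-t)) t = deriv (deriv u) (-t) := by
          rw [deriv.fun_neg, deriv_comp_neg (deriv u) t]
          ring
        rw [this]
        exact hS (-t)
      have hDv : deriv v (-t₀) = D := by
        rw [hdv1]
        simp only [neg_neg]
        rw [← ht₀, abs_of_nonpos (by linarith [abs_nonneg (deriv u t₀)] : deriv u t₀ ≤ 0)]
      have := lh_key v hdv hdv2 S hSv (-t₀) D hDv h hh
      have h1 : v (-t₀) = u t₀ := by simp [hv]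
      have h2 : v (-t₀ - h) = u (t₀ + h) := by simp [hv]; ring_nf
      rw [h1, h2] at this
      have h3 := huA t₀
      have h4 := huB (t₀ + h)
      linarith
  -- S > 0
  have hSpos : 0 < S := by
    by_contra hc
    push_neg at hc
    have hh : (0:ℝ) ≤ (A - B + 1) / D := by positivity
    have := hkey ((A - B + 1) / D) hh
    have hDh : D * ((A - B + 1) / D) = A - B + 1 := by field_simp
    nlinarith [sq_nonneg ((A - B + 1) / D)]
  -- conclude with h = D / S
  have := hkey (D / S) (by positivity)
  have heq : D * (D / S) - S * (D / S) ^ 2 / 2 = D ^ 2 / (2 * S) := by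
    field_simp
    ring
  rw [heq] at this
  rw [ge_iff_le, div_le_iff₀ (by positivity)]
  rw [div_le_iff₀ (by positivity)] at this
  nlinarith
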